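/- If X is a strongly star-Lindelöf topological space and Y is a subset of X of cardinality less than 𝔡, then Y is strongly star-Scheepers in X; that is, for each sequence (U_n) of open covers of X there exists a sequence (F_n) of finite subsets of X such that for each finite set F ⊆ Y there exists n with F ⊆ St(F_n, U_n). -/
import Mathlib


open Set

/-- The dominating number 𝔡: least cardinality of a dominating family in ℕ^ℕ. -/
noncomputable def dominatingNumber : Cardinal :=
  sInf { c | ∃ D : Set (ℕ → ℕ),
    (∀ g : ℕ → ℕ, ∃ f ∈ D, ∀ᶠ n in Filter.atTop, g n ≤ f n) ∧ c = Cardinal.mk D }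

/-- `U` is an open cover of the space `X`. -/
def IsOpenCover {X : Type u} [TopologicalSpace X] (U : Set (Set X)) : Prop :=
  (∀ u ∈ U, IsOpen u) ∧ ⋃₀ U = Set.univ

/-- The star of a set `A` with respect to a family `U`. -/
def starOf {X : Type*} (A : Set X) (U : Set (Set X)) : Set X :=
  ⋃₀ {B | B ∈ U ∧ (A ∩ B).Nonempty}

/-- The star-Scheepers property (ω-cover form). -/
def StarScheepers (X : Type*) [TopologicalSpace X] : Prop :=
  ∀ U : ℕ → Set (Set X), (∀ n, IsOpenCover (U n)) →
    ∃ V : ℕ → Set (Set X), (∀ n, V n ⊆ U n ∧ (V n).Finite) ∧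
      ∀ F : Set X, F.Finite → ∃ n, F ⊆ starOf (⋃₀ V n) (U n)

/-- The strongly star-Scheepers property. -/
def StronglyStarScheepers (X : Type*) [TopologicalSpace X] : Prop :=
  ∀ U : ℕ → Set (Set X), (∀ n, IsOpenCover (U n)) →
    ∃ F : ℕ → Set X, (∀ n, (F n).Finite) ∧
      ∀ G : Set X, G.Finite → ∃ n, G ⊆ starOf (F n) (U n)

universe u

lemma aleph0_lt_dominatingNumber : Cardinal.aleph0 < dominatingNumber := by
  have hne : { c | ∃ D : Set (ℕ → ℕ),
      (∀ g : ℕ → ℕ, ∃ f ∈ D, ∀ᶠ n in Filter.atTop, g n ≤ f n) ∧ c = Cardinal.mk D }.Nonempty := by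
    refine ⟨Cardinal.mk (Set.univ : Set (ℕ → ℕ)), Set.univ, fun g => ⟨g, trivial, ?_⟩, rfl⟩
    exact Filter.Eventually.of_forall (fun n => le_refl _)
  have key : ∀ c ∈ { c | ∃ D : Set (ℕ → ℕ),
      (∀ g : ℕ → ℕ, ∃ f ∈ D, ∀ᶠ n in Filter.atTop, g n ≤ f n) ∧ c = Cardinal.mk D },
      Cardinal.aleph0 < c := by
    rintro c ⟨D, hdom, rfl⟩
    by_contra hlt
    have hc : D.Countable :=
      Set.countable_coe_iff.mp (Cardinal.mk_le_aleph0_iff.mp (not_lt.mp hlt))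
    have hDne : D.Nonempty := by
      obtain ⟨f, hf, -⟩ := hdom 0
      exact ⟨f, hf⟩
    obtain ⟨h, rfl⟩ := hc.exists_eq_range hDne
    obtain ⟨f, ⟨i, rfl⟩, hev⟩ := hdom (fun n => (Finset.range (n + 1)).sup (fun j => h j n) + 1)
    obtain ⟨n, hle, hni⟩ := (hev.and (Filter.eventually_ge_atTop i)).exists
    have hsup : h i n ≤ (Finset.range (n + 1)).sup (fun j => h j n) :=
      Finset.le_sup (f := fun j => h j n) (Finset.mem_range.mpr (Nat.lt_succ_of_le hni))
    have hle' : (Finset.range (n + 1)).sup (fun j => h j n) + 1 ≤ h i n := hle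
    omega
  calc Cardinal.aleph0 < Order.succ Cardinal.aleph0 := Order.lt_succ _
    _ ≤ dominatingNumber := le_csInf hne (fun c hc => Order.succ_le_of_lt (key c hc))

lemma exists_not_dominated {ι : Type u} (f : ι → ℕ → ℕ)
    (h : Cardinal.lift.{0} (Cardinal.mk ι) < Cardinal.lift.{u} dominatingNumber) :
    ∃ g : ℕ → ℕ, ∀ i, ¬ ∀ᶠ n in Filter.atTop, g n ≤ f i n := by
  by_contra hcon
  push_neg at hcon
  have hdom : ∀ g : ℕ → ℕ, ∃ f' ∈ Set.range f, ∀ᶠ n in Filter.atTop, g n ≤ f' n := by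
    intro g
    obtain ⟨i, hi⟩ := hcon g
    exact ⟨f i, ⟨i, rfl⟩, hi⟩
  have h1 : dominatingNumber ≤ Cardinal.mk (Set.range f) :=
    csInf_le' ⟨Set.range f, hdom, rfl⟩
  have h2 : Cardinal.lift.{u} (Cardinal.mk (Set.range f)) ≤ Cardinal.lift.{0} (Cardinal.mk ι) :=
    Cardinal.mk_range_le_lift
  exact lt_irrefl _ (lt_of_le_of_lt ((Cardinal.lift_le.mpr h1).trans h2) h)

lemma starOf_mono {X : Type*} {A A' : Set X} (h : A ⊆ A') (U : Set (Set X)) :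
    starOf A U ⊆ starOf A' U := by
  rintro x ⟨B, ⟨hBU, z, hz1, hz2⟩, hxB⟩
  exact ⟨B, ⟨hBU, z, h hz1, hz2⟩, hxB⟩

theorem stmt_1 {X : Type u} [TopologicalSpace X]
    (hSSL : ∀ U : Set (Set X), IsOpenCover U →
      ∃ A : Set X, A.Countable ∧ starOf A U = Set.univ)
    (Y : Set X) (hY : Cardinal.lift.{0} (Cardinal.mk Y) < Cardinal.lift.{u} dominatingNumber) :
    ∀ U : ℕ → Set (Set X), (∀ n, IsOpenCover (U n)) →
      ∃ F : ℕ → Set X, (∀ n, (F n).Finite) ∧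
        ∀ G : Set X, G ⊆ Y → G.Finite → ∃ n, G ⊆ starOf (F n) (U n) := by
  intro U hU
  by_cases hX : Nonempty X
  · -- enumerate countable cores
    have hA : ∀ n, ∃ a : ℕ → X, starOf (Set.range a) (U n) = Set.univ := by
      intro n
      obtain ⟨A, hAc, hAs⟩ := hSSL (U n) (hU n)
      have hAne : A.Nonempty := by
        rcases A.eq_empty_or_nonempty with rfl | hne
        · exfalso
          obtain ⟨x⟩ := hX
          have hx : x ∈ starOf (∅ : Set X) (U n) := hAs ▸ Set.mem_univ x
          obtain ⟨B, ⟨-, hBne⟩, -⟩ := hx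
          simp at hBne
        · exact hne
      obtain ⟨a, rfl⟩ := hAc.exists_eq_range hAne
      exact ⟨a, hAs⟩
    choose a ha using hA
    -- choose indices
    have hP : ∀ (y : Y) (n : ℕ), ∃ k, (y : X) ∈ starOf {a n k} (U n) := by
      intro y n
      have hy : (y : X) ∈ starOf (Set.range (a n)) (U n) := (ha n) ▸ Set.mem_univ _
      obtain ⟨B, ⟨hBU, z, ⟨k, hk⟩, hzB⟩, hyB⟩ := hy
      exact ⟨k, B, ⟨hBU, a n k, rfl, by rw [hk]; exact hzB⟩, hyB⟩
    choose f hf using hP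
    set fS : Finset Y → ℕ → ℕ := fun S n => S.sup (fun y => f y n) with hfSdef
    have hcard : Cardinal.lift.{0} (Cardinal.mk (Finset Y)) <
        Cardinal.lift.{u} dominatingNumber := by
      rcases finite_or_infinite Y with hfin | hinf
      · haveI := hfin
        haveI := Fintype.ofFinite ↥Y
        have h1 : Cardinal.mk (Finset ↥Y) < Cardinal.aleph0 := Cardinal.lt_aleph0_of_finite _
        calc Cardinal.lift.{0} (Cardinal.mk (Finset ↥Y))
            < Cardinal.lift.{0} Cardinal.aleph0 := Cardinal.lift_lt.mpr h1
          _ = Cardinal.aleph0 := Cardinal.lift_aleph0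
          _ = Cardinal.lift.{u} Cardinal.aleph0 := Cardinal.lift_aleph0.symm
          _ < Cardinal.lift.{u} dominatingNumber :=
              Cardinal.lift_lt.mpr aleph0_lt_dominatingNumber
      · haveI := hinf
        rw [Cardinal.mk_finset_of_infinite]
        exact hY
    obtain ⟨g, hg⟩ := exists_not_dominated fS hcard
    refine ⟨fun n => a n '' {k | k < g n},
      fun n => Set.Finite.image _ (Set.finite_Iio (g n)), ?_⟩
    intro G hGY hGfin
    classical
    set S : Finset Y := hGfin.toFinset.subtype (· ∈ Y) with hSdef
    have hfreq : ∃ᶠ n in Filter.atTop, fS S n < g n := by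
      have h1 := hg S
      rw [Filter.not_eventually] at h1
      exact h1.mono (fun n hn => not_le.mp hn)
    obtain ⟨n, hn⟩ := hfreq.exists
    refine ⟨n, fun x hx => ?_⟩
    have hxY : x ∈ Y := hGY hx
    have hxS : (⟨x, hxY⟩ : Y) ∈ S := by
      rw [hSdef, Finset.mem_subtype]
      exact hGfin.mem_toFinset.mpr hx
    have hle : f ⟨x, hxY⟩ n < g n :=
      lt_of_le_of_lt (Finset.le_sup (f := fun y => f y n) hxS) hn
    obtain ⟨B, ⟨hBU, z, hz1, hz2⟩, hxB⟩ := hf ⟨x, hxY⟩ n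
    refine ⟨B, ⟨hBU, z, ?_, hz2⟩, hxB⟩
    rw [hz1]
    exact ⟨f ⟨x, hxY⟩ n, hle, rfl⟩
  · refine ⟨fun _ => ∅, fun _ => Set.finite_empty, fun G hGY hGfin => ⟨0, fun x hx => ?_⟩⟩
    exact absurd ⟨x⟩ hX
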